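/- (Lower semi-frame analysis operator, used in Section 5.1.) Let (X, μ) be a measure space, H a complex Hilbert space, and φ : X → H weakly measurable. Assume φ is a lower semi-frame: there exists c > 0 such that c‖f‖² ≤ ∫_X |⟨f, φ_x⟩|² dμ(x) for every f ∈ H (the integral taken in [0, ∞]). Let D(C_φ) = { f ∈ H : ∫_X |⟨f, φ_x⟩|² dμ(x) < ∞ } and C_φ f = (x ↦ ⟨f, φ_x⟩) ∈ L²(X, μ) for f ∈ D(C_φ). Then C_φ is injective on D(C_φ), and its range is closed in L²(X, μ): if f_n ∈ D(C_φ) and C_φ f_n converges in L² to some ξ, then there exists f ∈ D(C_φ) with ξ = C_φ f μ-almost everywhere. -/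

import Mathlib

open MeasureTheory Filter
open scoped ENNReal NNReal Topology

local notation "⟪" x ", " y "⟫" => @inner ℂ _ _ x y

lemma sq_eLpNorm_aux {X : Type*} [MeasurableSpace X] (μ : Measure X) (g : X → ℂ) :
    ∫⁻ x, (‖g x‖₊ : ℝ≥0∞) ^ 2 ∂μ = (eLpNorm g 2 μ) ^ 2 := by
  rw [eLpNorm_eq_lintegral_rpow_enorm_toReal two_ne_zero ENNReal.ofNat_ne_top]
  rw [ENNReal.toReal_ofNat, ← ENNReal.rpow_natCast _ 2, ← ENNReal.rpow_mul]
  norm_num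
  rfl

/-- lower semi-frame analysis operator, Section 5.1: If `φ : X → H` is a
weakly measurable lower semi-frame, i.e. `c‖f‖² ≤ ∫ |⟨f, φ_x⟩|² dμ` (integral in `[0,∞]`)
for all `f`, then `C_φ` is injective on `D(C_φ) = {f : ∫ |⟨f, φ_x⟩|² dμ < ∞}`, and its
range is closed in `L²(X, μ)`: if `f_n ∈ D(C_φ)` and `C_φ f_n → ξ` in `L²`, then there is
`f ∈ D(C_φ)` with `ξ = C_φ f` μ-a.e. Here `⟨f, φ_x⟩ = ⟪φ x, f⟫`. -/
theorem statement11
    {X : Type*} [MeasurableSpace X] (μ : Measure X)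
    {H : Type*} [NormedAddCommGroup H] [InnerProductSpace ℂ H] [CompleteSpace H]
    (φ : X → H)
    (hφmeas : ∀ f : H, Measurable fun x => ⟪φ x, f⟫)
    (c : ℝ) (hc : 0 < c)
    (hlow : ∀ f : H,
      ENNReal.ofReal (c * ‖f‖ ^ 2) ≤ ∫⁻ x, (‖⟪φ x, f⟫‖₊ : ℝ≥0∞) ^ 2 ∂μ) :
    (∀ f f' : H, (∫⁻ x, (‖⟪φ x, f⟫‖₊ : ℝ≥0∞) ^ 2 ∂μ) < ∞ →
      (∫⁻ x, (‖⟪φ x, f'⟫‖₊ : ℝ≥0∞) ^ 2 ∂μ) < ∞ →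
      (fun x => ⟪φ x, f⟫) =ᵐ[μ] (fun x => ⟪φ x, f'⟫) → f = f') ∧
    (∀ fseq : ℕ → H, (∀ n, (∫⁻ x, (‖⟪φ x, fseq n⟫‖₊ : ℝ≥0∞) ^ 2 ∂μ) < ∞) →
      ∀ ξ : X → ℂ, MemLp ξ 2 μ →
      Tendsto (fun n => eLpNorm (fun x => ⟪φ x, fseq n⟫ - ξ x) 2 μ) atTop (𝓝 0) →
      ∃ f : H, (∫⁻ x, (‖⟪φ x, f⟫‖₊ : ℝ≥0∞) ^ 2 ∂μ) < ∞ ∧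
        ξ =ᵐ[μ] fun x => ⟪φ x, f⟫) := by
  have hmeasC : ∀ f : H, AEStronglyMeasurable (fun x => ⟪φ x, f⟫) μ :=
    fun f => (hφmeas f).aestronglyMeasurable
  have hnormle : ∀ g : H, ∀ S : ℝ, 0 ≤ S →
      ENNReal.ofReal (c * ‖g‖ ^ 2) ≤ ENNReal.ofReal (S ^ 2) →
      ‖g‖ ≤ S / Real.sqrt c := by
    intro g S hS hle
    have h1 : c * ‖g‖ ^ 2 ≤ S ^ 2 := by
      have := (ENNReal.ofReal_le_ofReal_iff (by positivity)).mp hle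
      exact this
    have hsc : Real.sqrt c > 0 := Real.sqrt_pos.mpr hc
    rw [le_div_iff₀ hsc]
    nlinarith [Real.sq_sqrt hc.le, norm_nonneg g, hsc.le]
  constructor
  · -- injectivity
    intro f f' _ _ hae
    have h0 : ∫⁻ x, (‖⟪φ x, f - f'⟫‖₊ : ℝ≥0∞) ^ 2 ∂μ = 0 := by
      rw [← lintegral_zero (μ := μ)]
      refine lintegral_congr_ae ?_
      filter_upwards [hae] with x hx
      have : ⟪φ x, f - f'⟫ = 0 := by rw [inner_sub_right, hx, sub_self]
      simp [this]
    have hle := (hlow (f - f')).trans h0.le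
    have hc2 : c * ‖f - f'‖ ^ 2 ≤ 0 := by
      simpa using (ENNReal.ofReal_le_ofReal_iff le_rfl).mp (by simpa using hle)
    have h2 : ‖f - f'‖ ^ 2 ≤ 0 := by nlinarith [hc2]
    have hn : ‖f - f'‖ ^ 2 = 0 := le_antisymm h2 (sq_nonneg _)
    exact sub_eq_zero.mp (norm_eq_zero.mp (pow_eq_zero_iff two_ne_zero |>.mp hn))
  · -- closed range
    intro fseq hfin ξ hξ htend
    set a : ℕ → ℝ≥0∞ := fun n => eLpNorm (fun x => ⟪φ x, fseq n⟫ - ξ x) 2 μ with ha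
    have hCn : ∀ n, MemLp (fun x => ⟪φ x, fseq n⟫) 2 μ := by
      intro n
      refine ⟨hmeasC _, ?_⟩
      have h2 := hfin n
      rw [sq_eLpNorm_aux] at h2
      by_contra h
      rw [not_lt, top_le_iff] at h
      rw [h, ENNReal.top_pow (by norm_num)] at h2
      exact lt_irrefl _ h2
    have hCsub : ∀ n, MemLp (fun x => ⟪φ x, fseq n⟫ - ξ x) 2 μ := by
      intro n
      exact (hCn n).sub hξ
    have haf : ∀ n, a n ≠ ∞ := fun n => (hCsub n).2.ne
    -- triangle inequality bound
    have hb : ∀ n m : ℕ, (eLpNorm (fun x => ⟪φ x, fseq n - fseq m⟫) 2 μ) ≤ a n + a m := by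
      intro n m
      have heq : (fun x => ⟪φ x, fseq n - fseq m⟫)
          = (fun x => ⟪φ x, fseq n⟫ - ξ x) - (fun x => ⟪φ x, fseq m⟫ - ξ x) := by
        funext x
        simp only [Pi.sub_apply, inner_sub_right]
        ring
      rw [heq]
      calc eLpNorm ((fun x => ⟪φ x, fseq n⟫ - ξ x) - (fun x => ⟪φ x, fseq m⟫ - ξ x)) 2 μ
          ≤ eLpNorm (fun x => ⟪φ x, fseq n⟫ - ξ x) 2 μ
            + eLpNorm (fun x => ⟪φ x, fseq m⟫ - ξ x) 2 μ :=
            eLpNorm_sub_le (hCsub n).1 (hCsub m).1 one_le_two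
        _ = a n + a m := rfl
    have hkey : ∀ n m : ℕ, ‖fseq n - fseq m‖ ≤ ((a n).toReal + (a m).toReal) / Real.sqrt c := by
      intro n m
      refine hnormle _ _ (by positivity) ?_
      have h1 := (hlow (fseq n - fseq m)).trans_eq (sq_eLpNorm_aux μ _)
      have h2 : (eLpNorm (fun x => ⟪φ x, fseq n - fseq m⟫) 2 μ) ^ 2 ≤ (a n + a m) ^ 2 :=
        pow_le_pow_left' (hb n m) 2
      have h3 : (a n + a m) ^ 2 = ENNReal.ofReal (((a n).toReal + (a m).toReal) ^ 2) := by
        rw [ENNReal.ofReal_pow (by positivity), ENNReal.ofReal_add ENNReal.toReal_nonneg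
          ENNReal.toReal_nonneg, ENNReal.ofReal_toReal (haf n), ENNReal.ofReal_toReal (haf m)]
      exact (h1.trans h2).trans_eq h3
    have hr0 : Tendsto (fun n => (a n).toReal) atTop (𝓝 0) := by
      have := (ENNReal.tendsto_toReal ENNReal.zero_ne_top).comp htend
      exact this
    have hcauchy : CauchySeq fseq := by
      rw [Metric.cauchySeq_iff']
      intro ε hε
      have hsc : Real.sqrt c > 0 := Real.sqrt_pos.mpr hc
      have : ∀ᶠ n in atTop, (a n).toReal < Real.sqrt c * ε / 2 :=
        hr0.eventually (eventually_lt_nhds (by positivity))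
      obtain ⟨N, hN⟩ := this.exists_forall_of_atTop
      refine ⟨N, fun n hn => ?_⟩
      rw [dist_eq_norm]
      calc ‖fseq n - fseq N‖ ≤ ((a n).toReal + (a N).toReal) / Real.sqrt c := hkey n N
        _ < ε := by
            rw [div_lt_iff₀ hsc]
            have h1 := hN n hn
            have h2 := hN N le_rfl
            nlinarith
    obtain ⟨f, hf⟩ := cauchySeq_tendsto_of_complete hcauchy
    have htim : TendstoInMeasure μ (fun n x => ⟪φ x, fseq n⟫) atTop ξ := by
      refine tendstoInMeasure_of_tendsto_eLpNorm (p := 2) two_ne_zero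
        (fun n => hmeasC _) hξ.aestronglyMeasurable ?_
      exact htend
    obtain ⟨ns, hns, haes⟩ := htim.exists_seq_tendsto_ae
    have haeq : ξ =ᵐ[μ] fun x => ⟪φ x, f⟫ := by
      filter_upwards [haes] with x hx
      have h2 : Tendsto (fun k => ⟪φ x, fseq (ns k)⟫) atTop (𝓝 ⟪φ x, f⟫) :=
        Filter.Tendsto.inner tendsto_const_nhds (hf.comp hns.tendsto_atTop)
      exact tendsto_nhds_unique hx h2
    refine ⟨f, ?_, haeq⟩
    have heq2 : ∫⁻ x, (‖⟪φ x, f⟫‖₊ : ℝ≥0∞) ^ 2 ∂μ = ∫⁻ x, (‖ξ x‖₊ : ℝ≥0∞) ^ 2 ∂μ := by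
      refine lintegral_congr_ae ?_
      filter_upwards [haeq] with x hx
      rw [hx]
    rw [heq2, sq_eLpNorm_aux]
    exact ENNReal.pow_lt_top hξ.2
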